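/- arXiv:math/0012126 — 2 statements merged into one kernel-verified Lean document; each statement's English description precedes it below -/
import Mathlib

section
/- Let a, b, c be positive integers and let x be an integer with 1 ≤ x ≤ min(a,b). Then Σ_{i=a+1−x}^{a} E(i, x−a+i) = b·c·x/(a+b); equivalently, (a+b) · Σ_T Σ_{i=a+1−x}^{a} T(i, x−a+i) = b·c·x · N(a,b,c), where the outer sum is over all plane partitions T in the a×b×c box. -/
open Finset

/-- Plane partitions in an `a × b × c` box: assignments of entries in `{0, …, c}` to the
cells of an `a × b` rectangle with weakly decreasing rows and columns. -/
def PlanePartitions (a b c : ℕ) : Finset (Fin a → Fin b → Fin (c + 1)) :=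
  univ.filter (fun T =>
    (∀ i : Fin a, ∀ j j' : Fin b, j ≤ j' → T i j' ≤ T i j) ∧
    (∀ i i' : Fin a, ∀ j : Fin b, i ≤ i' → T i' j ≤ T i j))

/-- The entry `T(i, j)` of a plane partition at the 1-based cell `(i, j)`. -/
def entry (a b c : ℕ) (T : Fin a → Fin b → Fin (c + 1)) (i j : ℕ) : ℕ :=
  if h : 1 ≤ i ∧ i ≤ a ∧ 1 ≤ j ∧ j ≤ b then
    (T ⟨i - 1, by omega⟩ ⟨j - 1, by omega⟩ : ℕ)
  else 0

/-- `E a b c i j` is the expected value of the entry at the 1-based cell `(i, j)` of a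
uniformly random plane partition in an `a × b × c` box. -/
def E (a b c i j : ℕ) : ℚ :=
  (∑ T ∈ PlanePartitions a b c, (entry a b c T i j : ℚ))
    / ((PlanePartitions a b c).card : ℚ)

namespace PPaux

/-- Extended entry function, row-shifted by `b`, with boundary conventions. -/
def G (a b c : ℕ) (T : Fin a → Fin b → Fin (c + 1)) (r j : ℕ) : ℤ :=
  if j = 0 then (c : ℤ) else if b < j then 0 else if r ≤ b then (c : ℤ)
  else (entry a b c T (r - b) j : ℤ)

variable {a b c : ℕ}

lemma entry_le (T : Fin a → Fin b → Fin (c + 1)) (i j : ℕ) : entry a b c T i j ≤ c := by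
  unfold entry
  split
  · exact Nat.lt_succ_iff.mp (Fin.is_lt _)
  · omega

lemma G_nonneg (T : Fin a → Fin b → Fin (c + 1)) (r j : ℕ) : 0 ≤ G a b c T r j := by
  unfold G; split_ifs <;> positivity

lemma G_le (T : Fin a → Fin b → Fin (c + 1)) (r j : ℕ) : G a b c T r j ≤ (c : ℤ) := by
  unfold G; split_ifs <;> simp [entry_le]

lemma G_left (T : Fin a → Fin b → Fin (c + 1)) (r : ℕ) : G a b c T r 0 = (c : ℤ) := by
  simp [G]

lemma G_right (T : Fin a → Fin b → Fin (c + 1)) (r j : ℕ) (h : b < j) : G a b c T r j = 0 := by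
  unfold G; split_ifs <;> omega

lemma G_top (T : Fin a → Fin b → Fin (c + 1)) (r j : ℕ) (h : r ≤ b) (h1 : j ≤ b) :
    G a b c T r j = (c : ℤ) := by
  unfold G; split_ifs <;> omega

lemma G_zero (T : Fin a → Fin b → Fin (c + 1)) (r j : ℕ) (h : a + b < r) (h1 : 1 ≤ j) :
    G a b c T r j = 0 := by
  unfold G
  split_ifs with h2 h3 h4
  · omega
  · rfl
  · omega
  · rw [entry]; rw [dif_neg] <;> simp <;> omega

lemma G_body (T : Fin a → Fin b → Fin (c + 1)) (r j : ℕ) (h : b < r) (h2 : r ≤ a + b)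
    (h3 : 1 ≤ j) (h4 : j ≤ b) :
    G a b c T r j = (T ⟨r - b - 1, by omega⟩ ⟨j - 1, by omega⟩ : ℕ) := by
  unfold G
  rw [if_neg (by omega), if_neg (by omega), if_neg (by omega), entry, dif_pos (by omega)]

end PPaux

namespace PPaux
variable {a b c : ℕ}

lemma mem_PP_iff (T : Fin a → Fin b → Fin (c + 1)) :
    T ∈ PlanePartitions a b c ↔
      ((∀ i : Fin a, ∀ j j' : Fin b, j ≤ j' → T i j' ≤ T i j) ∧
       (∀ i i' : Fin a, ∀ j : Fin b, i ≤ i' → T i' j ≤ T i j)) := by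
  simp [PlanePartitions]

lemma G_mono_r (T : Fin a → Fin b → Fin (c + 1)) (hT : T ∈ PlanePartitions a b c)
    (r j : ℕ) : G a b c T (r + 1) j ≤ G a b c T r j := by
  rcases Nat.eq_zero_or_pos j with hj | hj
  · subst hj; simp [G_left]
  rcases lt_or_ge b j with hjb | hjb
  · rw [G_right T _ _ hjb, G_right T _ _ hjb]
  rcases le_or_gt (r + 1) b with hr | hr
  · rw [G_top T _ _ hr hjb, G_top T _ _ (by omega) hjb]
  rcases le_or_gt r b with hr2 | hr2
  · rw [G_top T _ _ hr2 hjb]; exact G_le T _ _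
  rcases le_or_gt (r + 1) (a + b) with hr3 | hr3
  · rw [G_body T _ _ (by omega) hr3 hj hjb, G_body T _ _ hr2 (by omega) hj hjb]
    have := (mem_PP_iff T).mp hT |>.2 ⟨r - b - 1, by omega⟩ ⟨r + 1 - b - 1, by omega⟩
      ⟨j - 1, by omega⟩ (Fin.mk_le_mk.mpr (by omega))
    exact_mod_cast this
  · rw [G_zero T _ _ hr3 hj]; exact G_nonneg T _ _

lemma G_mono_j (T : Fin a → Fin b → Fin (c + 1)) (hT : T ∈ PlanePartitions a b c)
    (r j : ℕ) : G a b c T r (j + 1) ≤ G a b c T r j := by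
  rcases Nat.eq_zero_or_pos j with hj | hj
  · subst hj; rw [G_left]; exact G_le T _ _
  rcases lt_or_ge b j with hjb | hjb
  · rw [G_right T _ _ hjb, G_right T _ _ (by omega)]
  rcases lt_or_ge b (j + 1) with hjb1 | hjb1
  · rw [G_right T _ _ hjb1]; exact G_nonneg T _ _
  rcases le_or_gt r b with hr | hr
  · rw [G_top T _ _ hr hjb, G_top T _ _ hr hjb1]
  rcases le_or_gt r (a + b) with hr2 | hr2
  · rw [G_body T _ _ hr hr2 hj hjb, G_body T _ _ hr hr2 (by omega) hjb1]
    have := (mem_PP_iff T).mp hT |>.1 ⟨r - b - 1, by omega⟩ ⟨j - 1, by omega⟩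
      ⟨j + 1 - 1, by omega⟩ (Fin.mk_le_mk.mpr (by omega))
    exact_mod_cast this
  · rw [G_zero T _ _ hr2 hj, G_zero T _ _ hr2 (by omega)]

/-- The face count on diagonal `t - b` (t-th of the `a+b` diagonals). -/
def F (a b c : ℕ) (T : Fin a → Fin b → Fin (c + 1)) (t : ℕ) : ℤ :=
  ∑ j ∈ range b, (G a b c T (t + j + 1) (j + 1) - G a b c T (t + j + 2) (j + 1))

lemma sumF (T : Fin a → Fin b → Fin (c + 1)) :
    ∑ t ∈ range (a + b), F a b c T t = (b : ℤ) * c := by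
  simp only [F]
  rw [Finset.sum_comm]
  have : ∀ j ∈ range b, ∑ t ∈ range (a + b),
      (G a b c T (t + j + 1) (j + 1) - G a b c T (t + j + 2) (j + 1)) = (c : ℤ) := by
    intro j hj
    simp only [mem_range] at hj
    have := Finset.sum_range_sub' (f := fun t => G a b c T (t + j + 1) (j + 1)) (n := a + b)
    simp only [show ∀ t : ℕ, t + 1 + j + 1 = t + j + 2 from fun t => by ring] at this
    rw [this, G_top T _ _ (by omega) (by omega), G_zero T _ _ (by omega) (by omega), sub_zero]
  rw [Finset.sum_congr rfl this]
  simp [mul_comm]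

end PPaux

namespace PPaux
variable {a b c : ℕ}

lemma diagF (T : Fin a → Fin b → Fin (c + 1)) (x : ℕ) (hx1 : 1 ≤ x) (hxa : x ≤ a) (hxb : x ≤ b) :
    ∑ t ∈ Ico (a + b - x) (a + b), F a b c T t
      = ∑ i ∈ Icc (a + 1 - x) a, (entry a b c T i (x + i - a) : ℤ) := by
  simp only [F]
  rw [Finset.sum_comm]
  have step : ∀ j ∈ range b, ∑ t ∈ Ico (a + b - x) (a + b),
      (G a b c T (t + j + 1) (j + 1) - G a b c T (t + j + 2) (j + 1))
      = G a b c T (a + b - x + j + 1) (j + 1) := by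
    intro j hj
    simp only [mem_range] at hj
    have tel : ∀ n : ℕ, ∑ t ∈ range n, (G a b c T (t + j + 1) (j + 1)
        - G a b c T (t + j + 2) (j + 1)) = G a b c T (j + 1) (j + 1)
        - G a b c T (n + j + 1) (j + 1) := by
      intro n
      have := Finset.sum_range_sub' (f := fun t => G a b c T (t + j + 1) (j + 1)) (n := n)
      simp only [show ∀ t : ℕ, t + 1 + j + 1 = t + j + 2 from fun t => by ring] at this
      simpa using this
    rw [Finset.sum_Ico_eq_sub _ (by omega : a + b - x ≤ a + b), tel, tel]
    have h0 : G a b c T (a + b + j + 1) (j + 1) = 0 := G_zero T _ _ (by omega) (by omega)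
    rw [h0]
    ring
  rw [Finset.sum_congr rfl step]
  have hsub : range x ⊆ range b := fun j hj => by simp only [mem_range] at *; omega
  have hkill : ∑ j ∈ range x, G a b c T (a + b - x + j + 1) (j + 1)
      = ∑ j ∈ range b, G a b c T (a + b - x + j + 1) (j + 1) :=
    Finset.sum_subset hsub (fun j hj hj2 => by
      simp only [mem_range] at hj hj2
      exact G_zero T _ _ (by omega) (by omega))
  rw [← hkill, ← Finset.Ico_add_one_right_eq_Icc, Finset.sum_Ico_eq_sum_range]
  have hxx : a + 1 - (a + 1 - x) = x := by omega
  rw [hxx]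
  apply Finset.sum_congr rfl
  intro j hj
  simp only [mem_range] at hj
  rw [G_body T _ _ (by omega) (by omega) (by omega) (by omega), entry, dif_pos (by omega)]
  have e1 : a + b - x + j + 1 - b - 1 = a + 1 - x + j - 1 := by omega
  have e2 : j + 1 - 1 = x + (a + 1 - x + j) - a - 1 := by omega
  simp only [e1, e2]

end PPaux

namespace PPaux
variable {a b c : ℕ}

/-- local complementation value at cell `(i0, j0)` (0-based). -/
def nv (a b c : ℕ) (T : Fin a → Fin b → Fin (c + 1)) (i0 j0 : ℕ) : ℤ :=
  min (G a b c T (i0 + b) (j0 + 1)) (G a b c T (i0 + b + 1) j0)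
    + max (G a b c T (i0 + b + 2) (j0 + 1)) (G a b c T (i0 + b + 1) (j0 + 2))
    - G a b c T (i0 + b + 1) (j0 + 1)

/-- The Bender–Knuth toggle on the diagonal `i0 + b = t + 1 + j0` (0-based cells). -/
def Phi (a b c t : ℕ) (T : Fin a → Fin b → Fin (c + 1)) : Fin a → Fin b → Fin (c + 1) :=
  fun i0 j0 =>
    if (i0 : ℕ) + b = t + 1 + (j0 : ℕ) then
      ⟨min c (nv a b c T i0 j0).toNat, by omega⟩
    else T i0 j0

lemma G_cell (T : Fin a → Fin b → Fin (c + 1)) (i0 : Fin a) (j0 : Fin b) :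
    G a b c T ((i0 : ℕ) + b + 1) ((j0 : ℕ) + 1) = ((T i0 j0 : ℕ) : ℤ) := by
  rw [G_body T _ _ (by omega) (by omega) (by omega) (by omega)]
  simp only [show (i0:ℕ) + b + 1 - b - 1 = (i0:ℕ) from by omega,
    show (j0:ℕ) + 1 - 1 = (j0:ℕ) from by omega, Fin.eta]

lemma nv_bounds (T : Fin a → Fin b → Fin (c + 1)) (hT : T ∈ PlanePartitions a b c)
    (i0 : Fin a) (j0 : Fin b) :
    max (G a b c T ((i0 : ℕ) + b + 2) ((j0 : ℕ) + 1)) (G a b c T ((i0 : ℕ) + b + 1) ((j0 : ℕ) + 2))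
        ≤ nv a b c T i0 j0 ∧
      nv a b c T i0 j0
        ≤ min (G a b c T ((i0 : ℕ) + b) ((j0 : ℕ) + 1)) (G a b c T ((i0 : ℕ) + b + 1) (j0 : ℕ)) := by
  have h1 := G_mono_r T hT ((i0 : ℕ) + b) ((j0 : ℕ) + 1)
  have h2 := G_mono_j T hT ((i0 : ℕ) + b + 1) (j0 : ℕ)
  have h3 := G_mono_r T hT ((i0 : ℕ) + b + 1) ((j0 : ℕ) + 1)
  have h4 := G_mono_j T hT ((i0 : ℕ) + b + 1) ((j0 : ℕ) + 1)
  have hminB : G a b c T ((i0 : ℕ) + b + 1) ((j0 : ℕ) + 1)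
      ≤ min (G a b c T ((i0 : ℕ) + b) ((j0 : ℕ) + 1)) (G a b c T ((i0 : ℕ) + b + 1) (j0 : ℕ)) :=
    le_min h1 h2
  have hmaxB : max (G a b c T ((i0 : ℕ) + b + 2) ((j0 : ℕ) + 1))
      (G a b c T ((i0 : ℕ) + b + 1) ((j0 : ℕ) + 2)) ≤ G a b c T ((i0 : ℕ) + b + 1) ((j0 : ℕ) + 1) := by
    apply max_le
    · simpa [show (i0:ℕ)+b+1+1 = (i0:ℕ)+b+2 by ring] using h3
    · simpa [show (j0:ℕ)+1+1 = (j0:ℕ)+2 by ring] using h4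
  unfold nv
  constructor <;> linarith

lemma nv_nonneg (T : Fin a → Fin b → Fin (c + 1)) (hT : T ∈ PlanePartitions a b c)
    (i0 : Fin a) (j0 : Fin b) : 0 ≤ nv a b c T i0 j0 :=
  le_trans (le_max_iff.mpr (Or.inl (G_nonneg T _ _))) (nv_bounds T hT i0 j0).1

lemma nv_le (T : Fin a → Fin b → Fin (c + 1)) (hT : T ∈ PlanePartitions a b c)
    (i0 : Fin a) (j0 : Fin b) : nv a b c T i0 j0 ≤ (c : ℤ) :=
  le_trans (nv_bounds T hT i0 j0).2 (min_le_iff.mpr (Or.inl (G_le T _ _)))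

lemma Phi_val (t : ℕ) (T : Fin a → Fin b → Fin (c + 1)) (hT : T ∈ PlanePartitions a b c)
    (i0 : Fin a) (j0 : Fin b) (h : (i0 : ℕ) + b = t + 1 + (j0 : ℕ)) :
    ((Phi a b c t T i0 j0 : ℕ) : ℤ) = nv a b c T i0 j0 := by
  have h1 := nv_nonneg T hT i0 j0
  have h2 := nv_le T hT i0 j0
  rw [Phi, if_pos h]
  simp only []
  omega

lemma Phi_off (t : ℕ) (T : Fin a → Fin b → Fin (c + 1))
    (i0 : Fin a) (j0 : Fin b) (h : ¬ ((i0 : ℕ) + b = t + 1 + (j0 : ℕ))) :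
    Phi a b c t T i0 j0 = T i0 j0 := by
  rw [Phi, if_neg h]

lemma G_Phi_off (t : ℕ) (T : Fin a → Fin b → Fin (c + 1)) (r j : ℕ)
    (h : r ≠ t + 1 + j) : G a b c (Phi a b c t T) r j = G a b c T r j := by
  unfold G
  split_ifs with h1 h2 h3
  · rfl
  · rfl
  · rfl
  · unfold entry
    split_ifs with h4
    · rw [Phi, if_neg (by simp only [Fin.val_mk]; omega)]
    · rfl

end PPaux

namespace PPaux
variable {a b c : ℕ}

lemma G_Phi_diag (t : ℕ) (T : Fin a → Fin b → Fin (c + 1)) (hT : T ∈ PlanePartitions a b c)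
    (j : ℕ) (hj1 : 1 ≤ j) (hjb : j ≤ b) (ht : t + 2 ≤ a + b) :
    G a b c (Phi a b c t T) (t + 1 + j) j
      = min (G a b c T (t + j) j) (G a b c T (t + j + 1) (j - 1))
        + max (G a b c T (t + j + 2) j) (G a b c T (t + j + 1) (j + 1))
        - G a b c T (t + j + 1) j := by
  rcases le_or_gt (t + 1 + j) b with hr | hr
  · -- above the box : everything is c
    rw [G_top _ _ _ hr hjb]
    have hA : G a b c T (t + j) j = (c : ℤ) := G_top T _ _ (by omega) hjb
    have hB : G a b c T (t + j + 1) j = (c : ℤ) := G_top T _ _ (by omega) hjb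
    have hmin : G a b c T (t + j + 1) (j - 1) = (c : ℤ) := by
      rcases Nat.eq_zero_or_pos (j - 1) with h0 | h0
      · rw [h0, G_left]
      · exact G_top T _ _ (by omega) (by omega)
    have hmax : max (G a b c T (t + j + 2) j) (G a b c T (t + j + 1) (j + 1)) = (c : ℤ) := by
      have hQ : G a b c T (t + j + 1) (j + 1) = (c : ℤ) := G_top T _ _ (by omega) (by omega)
      have := G_le T (t + j + 2) j
      rw [hQ]; omega
    rw [hA, hB, hmin, min_self, hmax]; ring
  rcases le_or_gt (t + 1 + j) (a + b) with hr2 | hr2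
  · -- body cell : the toggle value
    rw [G_body _ _ _ hr hr2 hj1 hjb]
    have hcond : ((⟨t + 1 + j - b - 1, by omega⟩ : Fin a) : ℕ) + b
        = t + 1 + ((⟨j - 1, by omega⟩ : Fin b) : ℕ) := by
      simp only [Fin.val_mk]; omega
    have := Phi_val t T hT ⟨t + 1 + j - b - 1, by omega⟩ ⟨j - 1, by omega⟩ hcond
    rw [this]
    unfold nv
    simp only [Fin.val_mk]
    simp only [show t + 1 + j - b - 1 + b = t + j from by omega,
      show j - 1 + 1 = j from by omega,
      show t + 1 + j - b - 1 + b + 1 = t + j + 1 from by omega,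
      show t + 1 + j - b - 1 + b + 2 = t + j + 2 from by omega,
      show j - 1 + 2 = j + 1 from by omega]
  · -- below the box : everything relevant is 0
    have hj2 : 2 ≤ j := by omega
    rw [G_zero _ _ _ hr2 hj1]
    have hB : G a b c T (t + j + 1) j = 0 := G_zero T _ _ (by omega) hj1
    have h1 : G a b c T (t + j + 1) (j - 1) = 0 := G_zero T _ _ (by omega) (by omega)
    have h2 : G a b c T (t + j + 2) j = 0 := G_zero T _ _ (by omega) hj1
    have h3 : G a b c T (t + j + 1) (j + 1) = 0 := by
      rcases le_or_gt (j + 1) b with h | h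
      · exact G_zero T _ _ (by omega) (by omega)
      · exact G_right T _ _ h
    rw [hB, h1, h2, h3, min_eq_right (G_nonneg T (t + j) j), max_self]
    ring

end PPaux

namespace PPaux
variable {a b c : ℕ}

lemma key_bounds (T : Fin a → Fin b → Fin (c + 1)) (hT : T ∈ PlanePartitions a b c)
    (t j : ℕ) (hj1 : 1 ≤ j) :
    max (G a b c T (t + j + 2) j) (G a b c T (t + j + 1) (j + 1))
        ≤ G a b c T (t + j + 1) j ∧
      G a b c T (t + j + 1) j
        ≤ min (G a b c T (t + j) j) (G a b c T (t + j + 1) (j - 1)) := by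
  have h1 := G_mono_r T hT (t + j) j
  have h2 := G_mono_j T hT (t + j + 1) (j - 1)
  rw [show j - 1 + 1 = j from by omega] at h2
  have h3 := G_mono_r T hT (t + j + 1) j
  have h4 := G_mono_j T hT (t + j + 1) j
  rw [show t + j + 1 + 1 = t + j + 2 from by omega] at h3
  exact ⟨max_le h3 h4, le_min h1 h2⟩

lemma G_Phi_mono_r (t : ℕ) (T : Fin a → Fin b → Fin (c + 1)) (hT : T ∈ PlanePartitions a b c)
    (ht : t + 2 ≤ a + b) (r j : ℕ) :
    G a b c (Phi a b c t T) (r + 1) j ≤ G a b c (Phi a b c t T) r j := by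
  rcases Nat.eq_zero_or_pos j with hj0 | hj0
  · subst hj0; rw [G_left, G_left]
  rcases le_or_gt j b with hjb | hjb
  swap
  · rw [G_right _ _ _ hjb, G_right _ _ _ hjb]
  by_cases hd1 : r = t + 1 + j
  · subst hd1
    rw [G_Phi_diag t T hT j hj0 hjb ht,
      G_Phi_off t T _ _ (by omega), show t + 1 + j + 1 = t + j + 2 from by omega]
    have hb := key_bounds T hT t j hj0
    have : G a b c T (t + j + 2) j ≤ max (G a b c T (t + j + 2) j)
        (G a b c T (t + j + 1) (j + 1)) := le_max_left _ _
    have := hb.2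
    simp only [le_min_iff] at this
    omega
  by_cases hd2 : r + 1 = t + 1 + j
  · have hrr : r = t + j := by omega
    subst hrr
    rw [show t + j + 1 = t + 1 + j from by omega, G_Phi_diag t T hT j hj0 hjb ht,
      G_Phi_off t T _ _ (by omega)]
    have hb := key_bounds T hT t j hj0
    have : min (G a b c T (t + j) j) (G a b c T (t + j + 1) (j - 1))
        ≤ G a b c T (t + j) j := min_le_left _ _
    have := hb.1
    simp only [max_le_iff] at this
    omega
  · rw [G_Phi_off t T _ _ (by omega), G_Phi_off t T _ _ (by omega)]
    exact G_mono_r T hT r j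

lemma G_Phi_mono_j (t : ℕ) (T : Fin a → Fin b → Fin (c + 1)) (hT : T ∈ PlanePartitions a b c)
    (ht : t + 2 ≤ a + b) (r j : ℕ) :
    G a b c (Phi a b c t T) r (j + 1) ≤ G a b c (Phi a b c t T) r j := by
  rcases Nat.eq_zero_or_pos j with hj0 | hj0
  · subst hj0; rw [G_left]; exact G_le _ _ _
  rcases le_or_gt (j + 1) b with hjb | hjb
  swap
  · rw [G_right _ _ _ hjb]; exact G_nonneg _ _ _
  by_cases hd1 : r = t + 1 + j
  · subst hd1
    rw [G_Phi_diag t T hT j hj0 (by omega) ht,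
      G_Phi_off t T _ _ (by omega), show t + 1 + j = t + j + 1 from by omega]
    have hb := key_bounds T hT t j hj0
    have : G a b c T (t + j + 1) (j + 1) ≤ max (G a b c T (t + j + 2) j)
        (G a b c T (t + j + 1) (j + 1)) := le_max_right _ _
    have := hb.2
    simp only [le_min_iff] at this
    omega
  by_cases hd2 : r = t + 1 + (j + 1)
  · subst hd2
    rw [G_Phi_diag t T hT (j + 1) (by omega) hjb ht,
      G_Phi_off t T _ _ (by omega)]
    rw [show j + 1 - 1 = j from by omega]
    have hb := key_bounds T hT t (j + 1) (by omega)
    rw [show j + 1 - 1 = j from by omega] at hb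
    have h5 : min (G a b c T (t + (j + 1)) (j + 1)) (G a b c T (t + (j + 1) + 1) j)
        ≤ G a b c T (t + (j + 1) + 1) j := min_le_right _ _
    have := hb.1
    simp only [max_le_iff] at this
    rw [show t + 1 + (j + 1) = t + (j + 1) + 1 from by omega]
    omega
  · rw [G_Phi_off t T _ _ (by omega), G_Phi_off t T _ _ (by omega)]
    exact G_mono_j T hT r j

lemma Phi_mem (t : ℕ) (T : Fin a → Fin b → Fin (c + 1)) (hT : T ∈ PlanePartitions a b c)
    (ht : t + 2 ≤ a + b) : Phi a b c t T ∈ PlanePartitions a b c := by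
  rw [mem_PP_iff]
  constructor
  · intro i0 j0 j0' hle
    have mono : Antitone (fun j => G a b c (Phi a b c t T) ((i0 : ℕ) + b + 1) j) :=
      antitone_nat_of_succ_le (fun n => G_Phi_mono_j t T hT ht _ n)
    have := mono (show (j0 : ℕ) + 1 ≤ (j0' : ℕ) + 1 from by
      have := (Fin.le_def).mp hle; omega)
    dsimp only at this
    rw [G_cell, G_cell] at this
    rw [Fin.le_def]
    exact_mod_cast this
  · intro i0 i0' j0 hle
    have mono : Antitone (fun r => G a b c (Phi a b c t T) r ((j0 : ℕ) + 1)) :=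
      antitone_nat_of_succ_le (fun n => G_Phi_mono_r t T hT ht n _)
    have := mono (show (i0 : ℕ) + b + 1 ≤ (i0' : ℕ) + b + 1 from by
      have := (Fin.le_def).mp hle; omega)
    dsimp only at this
    rw [G_cell, G_cell] at this
    rw [Fin.le_def]
    exact_mod_cast this

end PPaux

namespace PPaux
variable {a b c : ℕ}

lemma Phi_invol (t : ℕ) (T : Fin a → Fin b → Fin (c + 1)) (hT : T ∈ PlanePartitions a b c)
    (ht : t + 2 ≤ a + b) : Phi a b c t (Phi a b c t T) = T := by
  funext i0 j0
  by_cases hd : (i0 : ℕ) + b = t + 1 + (j0 : ℕ)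
  · have h1 := Phi_val t (Phi a b c t T) (Phi_mem t T hT ht) i0 j0 hd
    have h2 := Phi_val t T hT i0 j0 hd
    unfold nv at h1
    rw [G_Phi_off t T _ _ (by omega), G_Phi_off t T _ _ (by omega),
      G_Phi_off t T _ _ (by omega), G_Phi_off t T _ _ (by omega), G_cell, h2] at h1
    unfold nv at h1
    have h3 := G_cell T i0 j0
    apply Fin.ext
    have : ((Phi a b c t (Phi a b c t T) i0 j0 : ℕ) : ℤ) = ((T i0 j0 : ℕ) : ℤ) := by omega
    exact_mod_cast this
  · rw [Phi_off t _ i0 j0 hd, Phi_off t _ i0 j0 hd]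

lemma F_Phi (t : ℕ) (T : Fin a → Fin b → Fin (c + 1)) (hT : T ∈ PlanePartitions a b c)
    (hb : 1 ≤ b) (ht : t + 2 ≤ a + b) :
    F a b c (Phi a b c t T) (t + 1) = F a b c T t := by
  classical
  set M : ℕ → ℤ := fun n =>
    max (G a b c T (t + n + 1) (n + 1)) (G a b c T (t + n + 2) n) - G a b c T (t + n + 2) n
    with hM
  have key : ∀ j ∈ range b,
      G a b c (Phi a b c t T) (t + 1 + j + 1) (j + 1)
        - G a b c (Phi a b c t T) (t + 1 + j + 2) (j + 1)
      = (G a b c T (t + j + 1) (j + 1) - G a b c T (t + j + 2) (j + 1))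
        + (M (j + 1) - M j) := by
    intro j hj
    simp only [mem_range] at hj
    rw [show t + 1 + j + 1 = t + 1 + (j + 1) from by ring,
      G_Phi_diag t T hT (j + 1) (by omega) (by omega) ht,
      G_Phi_off t T _ _ (by omega)]
    simp only [hM, show t + (j + 1) = t + j + 1 from by ring,
      show t + j + 1 + 1 = t + j + 2 from by ring,
      show t + j + 1 + 2 = t + j + 3 from by ring,
      show t + j + 2 + 1 = t + j + 3 from by ring,
      show j + 1 - 1 = j from by omega,
      show j + 1 + 1 = j + 2 from by ring,
      show t + 1 + j + 2 = t + j + 3 from by ring]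
    have e1 : min (G a b c T (t + j + 1) (j + 1)) (G a b c T (t + j + 2) j)
        + max (G a b c T (t + j + 1) (j + 1)) (G a b c T (t + j + 2) j)
        = G a b c T (t + j + 1) (j + 1) + G a b c T (t + j + 2) j :=
      min_add_max _ _
    have e2 : max (G a b c T (t + j + 3) (j + 1)) (G a b c T (t + j + 2) (j + 2))
        = max (G a b c T (t + j + 2) (j + 2)) (G a b c T (t + j + 3) (j + 1)) :=
      max_comm _ _
    omega
  rw [F, Finset.sum_congr rfl key, Finset.sum_add_distrib, Finset.sum_range_sub (f := M)]
  have hM0 : M 0 = 0 := by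
    simp only [hM]
    rw [show t + 0 + 1 = t + 1 from by ring, show t + 0 + 2 = t + 2 from by ring, G_left,
      max_eq_right (G_le T (t + 1) 1)]
    ring
  have hMb : M b = 0 := by
    simp only [hM]
    rw [G_right T _ _ (by omega), max_eq_right (G_nonneg T (t + b + 2) b)]
    ring
  rw [hM0, hMb, F]
  ring
end PPaux

namespace PPaux
variable {a b c : ℕ}

lemma S_succ (t : ℕ) (hb : 1 ≤ b) (ht : t + 2 ≤ a + b) :
    ∑ T ∈ PlanePartitions a b c, F a b c T (t + 1)
      = ∑ T ∈ PlanePartitions a b c, F a b c T t := by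
  classical
  refine (Finset.sum_bij' (fun T _ => Phi a b c t T) (fun T _ => Phi a b c t T)
    (fun T hT => Phi_mem t T hT ht) (fun T hT => Phi_mem t T hT ht)
    (fun T hT => Phi_invol t T hT ht) (fun T hT => Phi_invol t T hT ht)
    (fun T hT => (F_Phi t T hT hb ht).symm)).symm

lemma S_const (t : ℕ) (hb : 1 ≤ b) (ht : t < a + b) :
    ∑ T ∈ PlanePartitions a b c, F a b c T t
      = ∑ T ∈ PlanePartitions a b c, F a b c T 0 := by
  induction t with
  | zero => rfl
  | succ n ih => rw [S_succ n hb (by omega), ih (by omega)]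

end PPaux

open PPaux in
theorem diagonal_expected_sum_low (a b c : ℕ) (ha : 0 < a) (hb : 0 < b) (hc : 0 < c)
    (x : ℕ) (hx1 : 1 ≤ x) (hx2 : x ≤ min a b) :
    ∑ i ∈ Finset.Icc (a + 1 - x) a, E a b c i (x + i - a)
      = (b : ℚ) * c * x / ((a : ℚ) + b) := by
  classical
  have hxa : x ≤ a := le_trans hx2 (min_le_left a b)
  have hxb : x ≤ b := le_trans hx2 (min_le_right a b)
  set N := (PlanePartitions a b c).card with hNdef
  have hN : 0 < N := by
    apply Finset.card_pos.mpr
    refine ⟨fun _ _ => 0, ?_⟩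
    rw [mem_PP_iff]
    exact ⟨fun _ _ _ _ => le_refl _, fun _ _ _ _ => le_refl _⟩
  set S0 : ℤ := ∑ T ∈ PlanePartitions a b c, F a b c T 0 with hS0
  have htot : (a + b : ℤ) * S0 = (N : ℤ) * (b * c) := by
    have h1 : ∑ t ∈ range (a + b), (∑ T ∈ PlanePartitions a b c, F a b c T t)
        = ∑ t ∈ range (a + b), S0 := by
      apply Finset.sum_congr rfl
      intro t ht
      simp only [mem_range] at ht
      exact S_const t hb ht
    rw [Finset.sum_comm] at h1
    have h2 : ∀ T ∈ PlanePartitions a b c, ∑ t ∈ range (a + b), F a b c T t = (b : ℤ) * c :=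
      fun T _ => sumF T
    rw [Finset.sum_congr rfl h2] at h1
    simp only [Finset.sum_const, nsmul_eq_mul, Finset.card_range] at h1
    rw [← hNdef] at h1
    push_cast at h1 ⊢
    linarith [h1]
  have hdiag : ∑ T ∈ PlanePartitions a b c,
      (∑ i ∈ Finset.Icc (a + 1 - x) a, (entry a b c T i (x + i - a) : ℤ)) = (x : ℤ) * S0 := by
    have h1 : ∀ T ∈ PlanePartitions a b c,
        ∑ i ∈ Finset.Icc (a + 1 - x) a, (entry a b c T i (x + i - a) : ℤ)
          = ∑ t ∈ Ico (a + b - x) (a + b), F a b c T t :=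
      fun T _ => (diagF T x hx1 hxa hxb).symm
    rw [Finset.sum_congr rfl h1, Finset.sum_comm]
    have h2 : ∀ t ∈ Ico (a + b - x) (a + b), (∑ T ∈ PlanePartitions a b c, F a b c T t) = S0 := by
      intro t ht
      simp only [mem_Ico] at ht
      exact S_const t hb ht.2
    rw [Finset.sum_congr rfl h2]
    simp only [Finset.sum_const, nsmul_eq_mul, Nat.card_Ico]
    congr 1
    omega
  -- pass to ℚ
  have hNQ : ((N : ℚ)) ≠ 0 := by positivity
  have habQ : ((a : ℚ) + b) ≠ 0 := by positivity
  have lhs_eq : ∑ i ∈ Finset.Icc (a + 1 - x) a, E a b c i (x + i - a)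
      = ((∑ T ∈ PlanePartitions a b c,
          ∑ i ∈ Finset.Icc (a + 1 - x) a, (entry a b c T i (x + i - a) : ℚ)) : ℚ) / N := by
    unfold E
    rw [← Finset.sum_div, Finset.sum_comm]
  rw [lhs_eq, div_eq_div_iff hNQ habQ]
  have hcast : (∑ T ∈ PlanePartitions a b c,
      ∑ i ∈ Finset.Icc (a + 1 - x) a, (entry a b c T i (x + i - a) : ℚ))
      = ((∑ T ∈ PlanePartitions a b c,
          ∑ i ∈ Finset.Icc (a + 1 - x) a, (entry a b c T i (x + i - a) : ℤ) : ℤ) : ℚ) := by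
    push_cast
    rfl
  rw [hcast, hdiag]
  have : ((x : ℤ) * S0 : ℤ) * ((a : ℚ) + b) = ((((a + b : ℤ)) * S0 : ℤ) : ℚ) * x := by
    push_cast
    ring
  rw [this, htot]
  push_cast
  ring
end

section
/- Let a, b, c be positive integers and let x be an integer with max(a,b) ≤ x ≤ a+b−1. Then Σ_{i=1}^{a+b−x} E(i, x−a+i) = a·c·(a+b−x)/(a+b); equivalently, (a+b) · Σ_T Σ_{i=1}^{a+b−x} T(i, x−a+i) = a·c·(a+b−x) · N(a,b,c), where the outer sum is over all plane partitions T in the a×b×c box. -/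
open Finset

/-! ### Auxiliary development -/

/-- Extended entries of `T`, with 1-based integer coordinates: value `c` above/left of the
box, `0` below/right of it. -/
def Te (a b c : ℕ) (T : Fin a → Fin b → Fin (c + 1)) (I J : ℤ) : ℕ :=
  if h : 1 ≤ I ∧ I ≤ a ∧ 1 ≤ J ∧ J ≤ b then
    (T ⟨(I - 1).toNat, by omega⟩ ⟨(J - 1).toNat, by omega⟩ : ℕ)
  else if I ≤ 0 ∨ J ≤ 0 then c else 0

/-- Extended monotonicity along rows and columns. -/
def ExtMono (a b c : ℕ) (T : Fin a → Fin b → Fin (c + 1)) : Prop :=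
  (∀ I J : ℤ, Te a b c T I (J + 1) ≤ Te a b c T I J) ∧
  (∀ I J : ℤ, Te a b c T (I + 1) J ≤ Te a b c T I J)

lemma Te_le (a b c : ℕ) (T : Fin a → Fin b → Fin (c + 1)) (I J : ℤ) :
    Te a b c T I J ≤ c := by
  unfold Te
  split
  · exact Nat.lt_succ_iff.mp (T _ _).isLt
  · split <;> omega

lemma Te_coe (a b c : ℕ) (T : Fin a → Fin b → Fin (c + 1)) (i : Fin a) (j : Fin b) :
    Te a b c T ((i : ℤ) + 1) ((j : ℤ) + 1) = T i j := by
  have hi : (1 : ℤ) ≤ (i : ℤ) + 1 ∧ ((i : ℤ) + 1) ≤ a ∧ (1:ℤ) ≤ (j : ℤ) + 1 ∧ ((j : ℤ) + 1) ≤ b := by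
    have := i.isLt; have := j.isLt; omega
  rw [Te, dif_pos hi]
  have e1 : (⟨((i:ℤ) + 1 - 1).toNat, by omega⟩ : Fin a) = i := by
    apply Fin.ext; rw [Fin.val_mk]; omega
  have e2 : (⟨((j:ℤ) + 1 - 1).toNat, by omega⟩ : Fin b) = j := by
    apply Fin.ext; rw [Fin.val_mk]; omega
  rw [e1, e2]

lemma Te_in {a b c : ℕ} (T : Fin a → Fin b → Fin (c + 1)) {I J : ℤ}
    (h : 1 ≤ I ∧ I ≤ a ∧ 1 ≤ J ∧ J ≤ b) :
    Te a b c T I J = T ⟨(I - 1).toNat, by omega⟩ ⟨(J - 1).toNat, by omega⟩ := by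
  rw [Te, dif_pos h]

lemma Te_hi {a b c : ℕ} (T : Fin a → Fin b → Fin (c + 1)) {I J : ℤ}
    (h : I ≤ 0 ∨ J ≤ 0) : Te a b c T I J = c := by
  rw [Te, dif_neg (by omega), if_pos h]

lemma Te_lo {a b c : ℕ} (T : Fin a → Fin b → Fin (c + 1)) {I J : ℤ}
    (h1 : 1 ≤ I) (h2 : 1 ≤ J) (h3 : (a:ℤ) < I ∨ (b:ℤ) < J) : Te a b c T I J = 0 := by
  rw [Te, dif_neg (by omega), if_neg (by omega)]

lemma mem_PP_iff (a b c : ℕ) (T : Fin a → Fin b → Fin (c + 1)) :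
    T ∈ PlanePartitions a b c ↔
    ((∀ i : Fin a, ∀ j j' : Fin b, j ≤ j' → T i j' ≤ T i j) ∧
     (∀ i i' : Fin a, ∀ j : Fin b, i ≤ i' → T i' j ≤ T i j)) := by
  simp [PlanePartitions]

lemma extMono_of_mem {a b c : ℕ} {T : Fin a → Fin b → Fin (c + 1)}
    (hT : T ∈ PlanePartitions a b c) : ExtMono a b c T := by
  rw [mem_PP_iff] at hT
  obtain ⟨hrow, hcol⟩ := hT
  constructor
  · intro I J
    by_cases h1 : 1 ≤ I ∧ I ≤ (a:ℤ) ∧ 1 ≤ J + 1 ∧ J + 1 ≤ (b:ℤ)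
    · by_cases h2 : 1 ≤ I ∧ I ≤ (a:ℤ) ∧ 1 ≤ J ∧ J ≤ (b:ℤ)
      · rw [Te_in T h1, Te_in T h2]
        have := hrow ⟨(I-1).toNat, by omega⟩ ⟨(J-1).toNat, by omega⟩
          ⟨(J+1-1).toNat, by omega⟩ (by rw [Fin.mk_le_mk]; omega)
        exact this
      · rw [Te_hi T (show I ≤ 0 ∨ J ≤ 0 by omega)]
        exact Te_le a b c T I (J+1)
    · by_cases h3 : I ≤ 0 ∨ J + 1 ≤ 0
      · rw [Te_hi T h3, Te_hi T (show I ≤ 0 ∨ J ≤ 0 by omega)]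
      · rw [Te_lo T (by omega) (by omega) (by omega)]
        exact Nat.zero_le _
  · intro I J
    by_cases h1 : 1 ≤ I + 1 ∧ I + 1 ≤ (a:ℤ) ∧ 1 ≤ J ∧ J ≤ (b:ℤ)
    · by_cases h2 : 1 ≤ I ∧ I ≤ (a:ℤ) ∧ 1 ≤ J ∧ J ≤ (b:ℤ)
      · rw [Te_in T h1, Te_in T h2]
        have := hcol ⟨(I-1).toNat, by omega⟩ ⟨(I+1-1).toNat, by omega⟩
          ⟨(J-1).toNat, by omega⟩ (by rw [Fin.mk_le_mk]; omega)
        exact this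
      · rw [Te_hi T (show I ≤ 0 ∨ J ≤ 0 by omega)]
        exact Te_le a b c T (I+1) J
    · by_cases h3 : I + 1 ≤ 0 ∨ J ≤ 0
      · rw [Te_hi T h3, Te_hi T (show I ≤ 0 ∨ J ≤ 0 by omega)]
      · rw [Te_lo T (by omega) (by omega) (by omega)]
        exact Nat.zero_le _

lemma ExtMono.r {a b c : ℕ} {T : Fin a → Fin b → Fin (c + 1)} (hT : ExtMono a b c T)
    {I J J' : ℤ} (h : J = J' + 1) : Te a b c T I J ≤ Te a b c T I J' := by
  subst h; exact hT.1 I J'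

lemma ExtMono.c {a b c : ℕ} {T : Fin a → Fin b → Fin (c + 1)} (hT : ExtMono a b c T)
    {I I' J : ℤ} (h : I = I' + 1) : Te a b c T I J ≤ Te a b c T I' J := by
  subst h; exact hT.2 I' J

lemma ExtMono.row_le {a b c : ℕ} {T : Fin a → Fin b → Fin (c + 1)} (hT : ExtMono a b c T)
    (I : ℤ) {J J' : ℤ} (h : J ≤ J') : Te a b c T I J' ≤ Te a b c T I J := by
  exact Int.le_induction (motive := fun n _ => Te a b c T I n ≤ Te a b c T I J) le_rfl
    (fun n _ ih => le_trans (hT.1 I n) ih) J' h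

lemma ExtMono.col_le {a b c : ℕ} {T : Fin a → Fin b → Fin (c + 1)} (hT : ExtMono a b c T)
    {I I' : ℤ} (J : ℤ) (h : I ≤ I') : Te a b c T I' J ≤ Te a b c T I J := by
  exact Int.le_induction (motive := fun n _ => Te a b c T n J ≤ Te a b c T I J) le_rfl
    (fun n _ ih => le_trans (hT.2 n J) ih) I' h

lemma mem_of_extMono {a b c : ℕ} {T : Fin a → Fin b → Fin (c + 1)}
    (hT : ExtMono a b c T) : T ∈ PlanePartitions a b c := by
  rw [mem_PP_iff]
  constructor
  · intro i j j' hle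
    rw [Fin.le_def]
    rw [← Te_coe a b c T i j, ← Te_coe a b c T i j']
    exact hT.row_le _ (by have := Fin.le_def.mp hle; omega)
  · intro i i' j hle
    rw [Fin.le_def]
    rw [← Te_coe a b c T i j, ← Te_coe a b c T i' j]
    exact hT.col_le _ (by have := Fin.le_def.mp hle; omega)

/-- The Bender–Knuth style toggle on the diagonal `J - I = b - v` (1-based coordinates). -/
def tog (a b c : ℕ) (v : ℤ) (T : Fin a → Fin b → Fin (c + 1)) :
    Fin a → Fin b → Fin (c + 1) := fun i j =>
  if (j : ℤ) + 1 = (i : ℤ) + 1 + b - v then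
    ⟨min c (max (Te a b c T ((i:ℤ)+1) ((j:ℤ)+2)) (Te a b c T ((i:ℤ)+2) ((j:ℤ)+1)) +
            min (Te a b c T ((i:ℤ)) ((j:ℤ)+1)) (Te a b c T ((i:ℤ)+1) ((j:ℤ))) -
            (T i j : ℕ)),
     Nat.lt_succ_of_le (min_le_left _ _)⟩
  else T i j

/-- `Te` of the toggled partition. -/
lemma Te_tog (a b c : ℕ) (v : ℤ) (T : Fin a → Fin b → Fin (c + 1)) (I J : ℤ) :
    Te a b c (tog a b c v T) I J =
      if (1 ≤ I ∧ I ≤ a ∧ 1 ≤ J ∧ J ≤ b) ∧ J = I + b - v then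
        min c (max (Te a b c T I (J+1)) (Te a b c T (I+1) J) +
               min (Te a b c T (I-1) J) (Te a b c T I (J-1)) - Te a b c T I J)
      else Te a b c T I J := by
  by_cases h : 1 ≤ I ∧ I ≤ (a:ℤ) ∧ 1 ≤ J ∧ J ≤ (b:ℤ)
  · rw [Te_in (tog a b c v T) h, Te_in T h]
    set i0 : Fin a := ⟨(I - 1).toNat, by omega⟩ with hi0def
    set j0 : Fin b := ⟨(J - 1).toNat, by omega⟩ with hj0def
    have hi0 : (i0 : ℤ) = I - 1 := by rw [hi0def, Fin.val_mk]; omega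
    have hj0 : (j0 : ℤ) = J - 1 := by rw [hj0def, Fin.val_mk]; omega
    show (tog a b c v T i0 j0 : ℕ) = _
    rw [tog]
    by_cases hd : J = I + (b:ℤ) - v
    · rw [if_pos (by omega), if_pos ⟨h, hd⟩]
      have e1 : (i0:ℤ) + 1 = I := by omega
      have e2 : (j0:ℤ) + 1 = J := by omega
      have e3 : (i0:ℤ) + 2 = I + 1 := by omega
      have e4 : (j0:ℤ) + 2 = J + 1 := by omega
      have e5 : (i0:ℤ) = I - 1 := hi0
      have e6 : (j0:ℤ) = J - 1 := hj0
      rw [Fin.val_mk, e1, e2, e3, e4, e5, e6]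
    · rw [if_neg (by omega), if_neg (by tauto)]
  · have hne : ¬((1 ≤ I ∧ I ≤ (a:ℤ) ∧ 1 ≤ J ∧ J ≤ (b:ℤ)) ∧ J = I + (b:ℤ) - v) := by tauto
    rw [if_neg hne, Te, Te, dif_neg h, dif_neg h]

lemma Te_tog_off (a b c : ℕ) (v : ℤ) (T : Fin a → Fin b → Fin (c + 1)) {I J : ℤ}
    (hne : J ≠ I + (b:ℤ) - v) :
    Te a b c (tog a b c v T) I J = Te a b c T I J := by
  rw [Te_tog, if_neg (by tauto)]

lemma tog_extMono {a b c : ℕ} {T : Fin a → Fin b → Fin (c + 1)} (v : ℤ)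
    (hT : ExtMono a b c T) : ExtMono a b c (tog a b c v T) := by
  constructor
  · intro I J
    rw [Te_tog, Te_tog]
    split_ifs with h1 h2 h2
    · omega
    · rw [show J+1+1 = J+2 by ring, show J+1-1 = J by ring]
      have f1 : Te a b c T I (J+2) ≤ Te a b c T I (J+1) := hT.r (by ring)
      have f2 : Te a b c T (I+1) (J+1) ≤ Te a b c T I (J+1) := hT.c rfl
      have f3 : Te a b c T I (J+1) ≤ Te a b c T I J := hT.r rfl
      omega
    · have f1 : Te a b c T I J ≤ Te a b c T (I-1) J := hT.c (by ring)
      have f2 : Te a b c T I J ≤ Te a b c T I (J-1) := hT.r (by ring)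
      have f3 : Te a b c T I (J+1) ≤ c := Te_le a b c T I (J+1)
      have f4 : Te a b c T I (J+1) ≤ Te a b c T I J := hT.r rfl
      omega
    · exact hT.1 I J
  · intro I J
    rw [Te_tog, Te_tog]
    split_ifs with h1 h2 h2
    · omega
    · rw [show I+1+1 = I+2 by ring, show I+1-1 = I by ring]
      have f1 : Te a b c T (I+1) (J+1) ≤ Te a b c T (I+1) J := hT.r rfl
      have f2 : Te a b c T (I+2) J ≤ Te a b c T (I+1) J := hT.c (by ring)
      have f3 : Te a b c T (I+1) J ≤ Te a b c T I J := hT.c rfl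
      omega
    · have f1 : Te a b c T I J ≤ Te a b c T (I-1) J := hT.c (by ring)
      have f2 : Te a b c T I J ≤ Te a b c T I (J-1) := hT.r (by ring)
      have f3 : Te a b c T (I+1) J ≤ c := Te_le a b c T (I+1) J
      have f4 : Te a b c T (I+1) J ≤ Te a b c T I J := hT.c rfl
      omega
    · exact hT.2 I J

lemma tog_tog {a b c : ℕ} {T : Fin a → Fin b → Fin (c + 1)} (v : ℤ)
    (hT : ExtMono a b c T) : tog a b c v (tog a b c v T) = T := by
  funext i j
  by_cases hd : (j:ℤ) + 1 = (i:ℤ) + 1 + (b:ℤ) - v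
  · apply Fin.ext
    rw [tog]
    rw [if_pos hd, Fin.val_mk]
    rw [Te_tog_off a b c v T (show ((j:ℤ)+2) ≠ ((i:ℤ)+1) + (b:ℤ) - v by omega)]
    rw [Te_tog_off a b c v T (show ((j:ℤ)+1) ≠ ((i:ℤ)+2) + (b:ℤ) - v by omega)]
    rw [Te_tog_off a b c v T (show ((j:ℤ)+1) ≠ ((i:ℤ)) + (b:ℤ) - v by omega)]
    rw [Te_tog_off a b c v T (show ((j:ℤ)) ≠ ((i:ℤ)+1) + (b:ℤ) - v by omega)]
    have hval : (tog a b c v T i j : ℕ) =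
        min c (max (Te a b c T ((i:ℤ)+1) ((j:ℤ)+2)) (Te a b c T ((i:ℤ)+2) ((j:ℤ)+1)) +
               min (Te a b c T ((i:ℤ)) ((j:ℤ)+1)) (Te a b c T ((i:ℤ)+1) ((j:ℤ))) -
               (T i j : ℕ)) := by
      rw [tog, if_pos hd]
    have hA : Te a b c T ((i:ℤ)+1) ((j:ℤ)+2) ≤ (T i j : ℕ) := by
      rw [← Te_coe a b c T i j]; exact hT.r (by ring)
    have hB : Te a b c T ((i:ℤ)+2) ((j:ℤ)+1) ≤ (T i j : ℕ) := by
      rw [← Te_coe a b c T i j]; exact hT.c (by ring)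
    have hC : (T i j : ℕ) ≤ Te a b c T ((i:ℤ)) ((j:ℤ)+1) := by
      rw [← Te_coe a b c T i j]; exact hT.c rfl
    have hD : (T i j : ℕ) ≤ Te a b c T ((i:ℤ)+1) ((j:ℤ)) := by
      rw [← Te_coe a b c T i j]; exact hT.r rfl
    have hc1 : Te a b c T ((i:ℤ)) ((j:ℤ)+1) ≤ c := Te_le _ _ _ _ _ _
    have ht : (T i j : ℕ) ≤ c := Nat.lt_succ_iff.mp (T i j).isLt
    rw [hval]
    omega
  · rw [tog, if_neg, tog, if_neg hd]
    exact hd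

/-- Sum of the `v`-th diagonal (1-based diagonal `J - I = b - v`). -/
def R (a b c : ℕ) (T : Fin a → Fin b → Fin (c + 1)) (v : ℤ) : ℕ :=
  ∑ i ∈ Finset.range a, Te a b c T ((i : ℤ) + 1) ((i : ℤ) + 1 + b - v)

lemma shuffle_core (f g : ℕ → ℕ) (a : ℕ) :
    (∑ i ∈ Finset.range a, (max (f (i+1)) (g (i+2)) + min (f i) (g (i+1))))
      + max (f 0) (g 1) + min (f a) (g (a+1))
      = ∑ i ∈ Finset.range (a+1), (f i + g (i+1)) := by
  induction a with
  | zero =>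
    rw [Finset.sum_range_one]
    simp only [Finset.range_zero, Finset.sum_empty]
    have e0 : (0:ℕ) + 1 = 1 := rfl
    rw [e0]
    omega
  | succ a ih =>
    rw [Finset.sum_range_succ, Finset.sum_range_succ (f := fun i => f i + g (i+1))]
    have e1 : a + 1 + 1 = a + 2 := rfl
    rw [e1]
    omega

lemma shuffle_sum (f g : ℕ → ℕ) (a : ℕ) (h1 : g (a+1) ≤ f a) (h2 : g 1 ≤ f 0) :
    ∑ i ∈ Finset.range a, (max (f (i+1)) (g (i+2)) + min (f i) (g (i+1)))
      = ∑ i ∈ Finset.range a, f (i+1) + ∑ i ∈ Finset.range a, g (i+1) := by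
  have core := shuffle_core f g a
  have e2 : ∑ i ∈ Finset.range (a+1), (f i + g (i+1))
      = ∑ i ∈ Finset.range (a+1), f i + ∑ i ∈ Finset.range (a+1), g (i+1) :=
    Finset.sum_add_distrib
  have e3 : ∑ i ∈ Finset.range (a+1), f i = ∑ i ∈ Finset.range a, f (i+1) + f 0 :=
    Finset.sum_range_succ' f a
  have e4 : ∑ i ∈ Finset.range (a+1), g (i+1) = ∑ i ∈ Finset.range a, g (i+1) + g (a+1) :=
    Finset.sum_range_succ _ a
  have e5 : max (f 0) (g 1) = f 0 := max_eq_left h2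
  have e6 : min (f a) (g (a+1)) = g (a+1) := min_eq_right h1
  omega

lemma Te_congr (a b c : ℕ) (T : Fin a → Fin b → Fin (c + 1)) {I I' J J' : ℤ}
    (h1 : I = I') (h2 : J = J') : Te a b c T I J = Te a b c T I' J' := by
  rw [h1, h2]

lemma R_tog {a b c : ℕ} {T : Fin a → Fin b → Fin (c + 1)} (v : ℤ)
    (hT : ExtMono a b c T) (hv1 : 1 ≤ v) (hv2 : v ≤ (a : ℤ) + b - 1) :
    R a b c (tog a b c v T) v + R a b c T v = R a b c T (v - 1) + R a b c T (v + 1) := by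
  have key : ∀ i ∈ Finset.range a,
      Te a b c (tog a b c v T) ((i:ℤ)+1) ((i:ℤ)+1+(b:ℤ)-v) + Te a b c T ((i:ℤ)+1) ((i:ℤ)+1+(b:ℤ)-v)
      = max (Te a b c T (((i+1:ℕ)):ℤ) ((((i+1:ℕ)):ℤ)+(b:ℤ)-v+1))
            (Te a b c T (((i+2:ℕ)):ℤ) ((((i+2:ℕ)):ℤ)+(b:ℤ)-v-1))
        + min (Te a b c T ((i:ℕ):ℤ) (((i:ℕ):ℤ)+(b:ℤ)-v+1))
              (Te a b c T (((i+1:ℕ)):ℤ) ((((i+1:ℕ)):ℤ)+(b:ℤ)-v-1)) := by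
    intro i hi
    rw [Finset.mem_range] at hi
    have hA : Te a b c T (((i+1:ℕ)):ℤ) ((((i+1:ℕ)):ℤ)+(b:ℤ)-v+1)
        = Te a b c T ((i:ℤ)+1) (((i:ℤ)+1+(b:ℤ)-v)+1) := Te_congr _ _ _ _ (by push_cast; ring) (by push_cast; ring)
    have hB : Te a b c T (((i+2:ℕ)):ℤ) ((((i+2:ℕ)):ℤ)+(b:ℤ)-v-1)
        = Te a b c T (((i:ℤ)+1)+1) ((i:ℤ)+1+(b:ℤ)-v) := Te_congr _ _ _ _ (by push_cast; ring) (by push_cast; ring)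
    have hC : Te a b c T ((i:ℕ):ℤ) (((i:ℕ):ℤ)+(b:ℤ)-v+1)
        = Te a b c T (((i:ℤ)+1)-1) ((i:ℤ)+1+(b:ℤ)-v) := Te_congr _ _ _ _ (by push_cast; ring) (by push_cast; ring)
    have hD : Te a b c T (((i+1:ℕ)):ℤ) ((((i+1:ℕ)):ℤ)+(b:ℤ)-v-1)
        = Te a b c T ((i:ℤ)+1) (((i:ℤ)+1+(b:ℤ)-v)-1) := Te_congr _ _ _ _ (by push_cast; ring) (by push_cast; ring)
    rw [hA, hB, hC, hD, Te_tog]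
    by_cases hJ : 1 ≤ (i:ℤ)+1+(b:ℤ)-v ∧ (i:ℤ)+1+(b:ℤ)-v ≤ (b:ℤ)
    · rw [if_pos ⟨⟨by omega, by omega, hJ.1, hJ.2⟩, rfl⟩]
      have f1 : Te a b c T ((i:ℤ)+1) (((i:ℤ)+1+(b:ℤ)-v)+1) ≤ Te a b c T ((i:ℤ)+1) ((i:ℤ)+1+(b:ℤ)-v) := hT.r rfl
      have f2 : Te a b c T (((i:ℤ)+1)+1) ((i:ℤ)+1+(b:ℤ)-v) ≤ Te a b c T ((i:ℤ)+1) ((i:ℤ)+1+(b:ℤ)-v) := hT.c rfl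
      have f3 : Te a b c T ((i:ℤ)+1) ((i:ℤ)+1+(b:ℤ)-v) ≤ Te a b c T (((i:ℤ)+1)-1) ((i:ℤ)+1+(b:ℤ)-v) := hT.c (by ring)
      have f4 : Te a b c T ((i:ℤ)+1) ((i:ℤ)+1+(b:ℤ)-v) ≤ Te a b c T ((i:ℤ)+1) (((i:ℤ)+1+(b:ℤ)-v)-1) := hT.r (by ring)
      have f5 : Te a b c T (((i:ℤ)+1)-1) ((i:ℤ)+1+(b:ℤ)-v) ≤ c := Te_le _ _ _ _ _ _
      have f6 : Te a b c T ((i:ℤ)+1) (((i:ℤ)+1+(b:ℤ)-v)-1) ≤ c := Te_le _ _ _ _ _ _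
      omega
    · rw [if_neg (by tauto)]
      by_cases hJ0 : (i:ℤ)+1+(b:ℤ)-v ≤ 0
      · have g0 : Te a b c T ((i:ℤ)+1) ((i:ℤ)+1+(b:ℤ)-v) = c := Te_hi T (by omega)
        have g1 : Te a b c T (((i:ℤ)+1)+1) ((i:ℤ)+1+(b:ℤ)-v) = c := Te_hi T (by omega)
        have g2 : Te a b c T (((i:ℤ)+1)-1) ((i:ℤ)+1+(b:ℤ)-v) = c := Te_hi T (by omega)
        have g3 : Te a b c T ((i:ℤ)+1) (((i:ℤ)+1+(b:ℤ)-v)-1) = c := Te_hi T (by omega)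
        have g4 : Te a b c T ((i:ℤ)+1) (((i:ℤ)+1+(b:ℤ)-v)+1) ≤ c := Te_le _ _ _ _ _ _
        omega
      · -- here (i:ℤ)+1+b-v > b, i.e. column out of range to the right
        have hJb : (b:ℤ) < (i:ℤ)+1+(b:ℤ)-v := by omega
        have g0 : Te a b c T ((i:ℤ)+1) ((i:ℤ)+1+(b:ℤ)-v) = 0 := Te_lo T (by omega) (by omega) (by omega)
        have g1 : Te a b c T (((i:ℤ)+1)+1) ((i:ℤ)+1+(b:ℤ)-v) = 0 := Te_lo T (by omega) (by omega) (by omega)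
        have g2 : Te a b c T ((i:ℤ)+1) (((i:ℤ)+1+(b:ℤ)-v)+1) = 0 := Te_lo T (by omega) (by omega) (by omega)
        have g3 : Te a b c T (((i:ℤ)+1)-1) ((i:ℤ)+1+(b:ℤ)-v) = 0 := by
          -- uses v ≥ 1 so that i ≥ 1 here
          refine Te_lo T (by omega) (by omega) (by omega)
        omega
  have e1 : R a b c (tog a b c v T) v + R a b c T v
      = ∑ i ∈ Finset.range a, (Te a b c (tog a b c v T) ((i:ℤ)+1) ((i:ℤ)+1+(b:ℤ)-v)
          + Te a b c T ((i:ℤ)+1) ((i:ℤ)+1+(b:ℤ)-v)) := (Finset.sum_add_distrib).symm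
  have e2 := Finset.sum_congr rfl key
  have h1 : (fun k : ℕ => Te a b c T (k:ℤ) ((k:ℤ)+(b:ℤ)-v-1)) (a+1)
      ≤ (fun k : ℕ => Te a b c T (k:ℤ) ((k:ℤ)+(b:ℤ)-v+1)) a := by
    show Te a b c T (((a+1:ℕ)):ℤ) ((((a+1:ℕ)):ℤ)+(b:ℤ)-v-1)
        ≤ Te a b c T ((a:ℕ):ℤ) (((a:ℕ):ℤ)+(b:ℤ)-v+1)
    rw [Te_lo T (by push_cast; omega) (by push_cast; omega) (by push_cast; omega)]
    exact Nat.zero_le _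
  have h2 : (fun k : ℕ => Te a b c T (k:ℤ) ((k:ℤ)+(b:ℤ)-v-1)) 1
      ≤ (fun k : ℕ => Te a b c T (k:ℤ) ((k:ℤ)+(b:ℤ)-v+1)) 0 := by
    show Te a b c T (((1:ℕ)):ℤ) ((((1:ℕ)):ℤ)+(b:ℤ)-v-1)
        ≤ Te a b c T (((0:ℕ)):ℤ) ((((0:ℕ)):ℤ)+(b:ℤ)-v+1)
    have h0 : Te a b c T (((0:ℕ)):ℤ) ((((0:ℕ)):ℤ)+(b:ℤ)-v+1) = c := by
      apply Te_hi
      norm_num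
    rw [h0]
    exact Te_le _ _ _ _ _ _
  have e3 := shuffle_sum (fun k : ℕ => Te a b c T (k:ℤ) ((k:ℤ)+(b:ℤ)-v+1))
    (fun k : ℕ => Te a b c T (k:ℤ) ((k:ℤ)+(b:ℤ)-v-1)) a h1 h2
  have e4 : (∑ i ∈ Finset.range a, Te a b c T (((i+1:ℕ)):ℤ) ((((i+1:ℕ)):ℤ)+(b:ℤ)-v+1))
      + (∑ i ∈ Finset.range a, Te a b c T (((i+1:ℕ)):ℤ) ((((i+1:ℕ)):ℤ)+(b:ℤ)-v-1))
      = R a b c T (v - 1) + R a b c T (v + 1) := by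
    congr 1
    · exact Finset.sum_congr rfl (fun i _ => Te_congr _ _ _ _ (by push_cast; ring) (by push_cast; ring))
    · exact Finset.sum_congr rfl (fun i _ => Te_congr _ _ _ _ (by push_cast; ring) (by push_cast; ring))
  exact e1.trans (e2.trans (e3.trans e4))

/-- Total over all plane partitions of the `v`-th diagonal sum. -/
def s (a b c : ℕ) (v : ℕ) : ℕ :=
  ∑ T ∈ PlanePartitions a b c, R a b c T (v : ℤ)

lemma tog_mem {a b c : ℕ} {T : Fin a → Fin b → Fin (c + 1)} (v : ℤ)
    (hT : T ∈ PlanePartitions a b c) : tog a b c v T ∈ PlanePartitions a b c :=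
  mem_of_extMono (tog_extMono v (extMono_of_mem hT))

lemma sum_R_tog (a b c : ℕ) (v : ℤ) :
    ∑ T ∈ PlanePartitions a b c, R a b c (tog a b c v T) v
      = ∑ T ∈ PlanePartitions a b c, R a b c T v := by
  refine Finset.sum_nbij' (tog a b c v) (tog a b c v) ?_ ?_ ?_ ?_ ?_
  · exact fun T hT => tog_mem v hT
  · exact fun T hT => tog_mem v hT
  · exact fun T hT => tog_tog v (extMono_of_mem hT)
  · exact fun T hT => tog_tog v (extMono_of_mem hT)
  · intro T hT
    rfl

lemma s_rec (a b c : ℕ) (w : ℕ) (hw : w + 2 ≤ a + b) :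
    s a b c w + s a b c (w + 2) = 2 * s a b c (w + 1) := by
  set v : ℤ := (w : ℤ) + 1 with hv
  have hv1 : 1 ≤ v := by omega
  have hv2 : v ≤ (a : ℤ) + b - 1 := by push_cast; omega
  have step : ∀ T ∈ PlanePartitions a b c,
      R a b c T ((w : ℕ) : ℤ) + R a b c T (((w+2 : ℕ)) : ℤ)
      = R a b c (tog a b c v T) v + R a b c T v := by
    intro T hT
    have e1 : ((w : ℕ) : ℤ) = v - 1 := by omega
    have e2 : (((w+2 : ℕ)) : ℤ) = v + 1 := by push_cast; omega
    rw [e1, e2]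
    exact (R_tog v (extMono_of_mem hT) hv1 hv2).symm
  unfold s
  rw [← Finset.sum_add_distrib, Finset.sum_congr rfl step, Finset.sum_add_distrib,
    sum_R_tog a b c v, two_mul]
  have e3 : (((w+1 : ℕ)) : ℤ) = v := by push_cast; omega
  rw [e3]

lemma s_zero (a b c : ℕ) : s a b c 0 = 0 := by
  unfold s
  refine Finset.sum_eq_zero (fun T _ => ?_)
  unfold R
  refine Finset.sum_eq_zero (fun i hi => ?_)
  rw [Finset.mem_range] at hi
  exact Te_lo T (by omega) (by push_cast; omega) (by push_cast; omega)

lemma s_lin (a b c : ℕ) : ∀ v : ℕ, v ≤ a + b → s a b c v = v * s a b c 1 := by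
  intro v
  induction v using Nat.strong_induction_on with
  | _ v ih =>
    match v with
    | 0 => intro _; rw [s_zero]; ring
    | 1 => intro _; ring_nf
    | (w+2) =>
      intro hle
      have h0 := ih w (by omega) (by omega)
      have h1 := ih (w+1) (by omega) (by omega)
      have h2 := s_rec a b c w (by omega)
      -- s w + s (w+2) = 2 * s (w+1)
      have : s a b c w + s a b c (w+2) = 2 * ((w+1) * s a b c 1) := by rw [← h1]; exact h2
      have hw0 : s a b c w = w * s a b c 1 := h0
      -- conclude
      have : s a b c (w+2) = (w+2) * s a b c 1 := by
        have hg := this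
        rw [hw0] at hg
        ring_nf at hg ⊢
        omega
      exact this

lemma s_top (a b c : ℕ) : s a b c (a + b) = a * c * (PlanePartitions a b c).card := by
  unfold s
  have hR : ∀ T : Fin a → Fin b → Fin (c+1), R a b c T ((a + b : ℕ) : ℤ) = a * c := by
    intro T
    unfold R
    have : ∀ i ∈ Finset.range a,
        Te a b c T ((i:ℤ)+1) ((i:ℤ)+1+(b:ℤ)-((a + b : ℕ) : ℤ)) = c := by
      intro i hi
      rw [Finset.mem_range] at hi
      exact Te_hi T (by push_cast; omega)
    rw [Finset.sum_congr rfl this, Finset.sum_const, Finset.card_range, smul_eq_mul]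
  rw [Finset.sum_congr rfl (fun T _ => hR T), Finset.sum_const, smul_eq_mul]
  ring

lemma card_PP_pos (a b c : ℕ) : 0 < (PlanePartitions a b c).card := by
  rw [Finset.card_pos]
  refine ⟨fun _ _ => ⟨0, by omega⟩, ?_⟩
  rw [mem_PP_iff]
  exact ⟨fun _ _ _ _ => le_refl _, fun _ _ _ _ => le_refl _⟩

lemma entry_eq_Te (a b c : ℕ) (T : Fin a → Fin b → Fin (c + 1)) (i j : ℕ)
    (h1 : 1 ≤ i) (h2 : 1 ≤ j) :
    entry a b c T i j = Te a b c T (i:ℤ) (j:ℤ) := by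
  by_cases h : 1 ≤ i ∧ i ≤ a ∧ 1 ≤ j ∧ j ≤ b
  · rw [entry, dif_pos h, Te_in T (by push_cast; omega)]
    have eA : (⟨((i:ℤ) - 1).toNat, by omega⟩ : Fin a) = (⟨i - 1, by omega⟩ : Fin a) := by
      apply Fin.ext; rw [Fin.val_mk, Fin.val_mk]; omega
    have eB : (⟨((j:ℤ) - 1).toNat, by omega⟩ : Fin b) = (⟨j - 1, by omega⟩ : Fin b) := by
      apply Fin.ext; rw [Fin.val_mk, Fin.val_mk]; omega
    rw [eA, eB]
  · rw [entry, dif_neg h, Te_lo T (by omega) (by omega) (by push_cast; omega)]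

lemma R_bridge (a b c x : ℕ) (ha : 0 < a) (hb : 0 < b)
    (hxa : a ≤ x) (hxb : b ≤ x) (hx2 : x ≤ a + b - 1)
    (T : Fin a → Fin b → Fin (c + 1)) :
    R a b c T (((a + b - x : ℕ)) : ℤ) = ∑ i ∈ Finset.Icc 1 (a + b - x), entry a b c T i (x + i - a) := by
  set m : ℕ := a + b - x with hm
  have hm1 : 1 ≤ m := by omega
  have hma : m ≤ a := by omega
  have hmb : m ≤ b := by omega
  unfold R
  have drop : ∑ i ∈ Finset.range a, Te a b c T ((i:ℤ)+1) ((i:ℤ)+1+(b:ℤ)-((m:ℕ):ℤ))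
      = ∑ i ∈ Finset.range m, Te a b c T ((i:ℤ)+1) ((i:ℤ)+1+(b:ℤ)-((m:ℕ):ℤ)) := by
    refine (Finset.sum_subset (Finset.range_subset_range.mpr hma) ?_).symm
    intro i _ hnotin
    rw [Finset.mem_range] at hnotin
    exact Te_lo T (by omega) (by push_cast; omega) (by push_cast; omega)
  rw [drop]
  refine Finset.sum_nbij' (fun i => i + 1) (fun i => i - 1) ?_ ?_ ?_ ?_ ?_
  · intro i hi
    simp only [Finset.mem_range] at hi
    simp only [Finset.mem_Icc]
    omega
  · intro i hi
    simp only [Finset.mem_Icc] at hi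
    simp only [Finset.mem_range]
    omega
  · intro i _
    beta_reduce
    omega
  · intro i hi
    simp only [Finset.mem_Icc] at hi
    beta_reduce
    omega
  · intro i hi
    simp only [Finset.mem_range] at hi
    show Te a b c T ((i:ℤ)+1) ((i:ℤ)+1+(b:ℤ)-((m:ℕ):ℤ))
        = entry a b c T (i+1) (x+(i+1)-a)
    rw [entry_eq_Te a b c T (i+1) (x+(i+1)-a) (by omega) (by omega)]
    exact Te_congr _ _ _ _ (by push_cast; ring) (by omega)

theorem diagonal_expected_sum_high (a b c : ℕ) (ha : 0 < a) (hb : 0 < b) (hc : 0 < c)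
    (x : ℕ) (hx1 : max a b ≤ x) (hx2 : x ≤ a + b - 1) :
    ∑ i ∈ Finset.Icc 1 (a + b - x), E a b c i (x + i - a)
      = (a : ℚ) * c * ((a : ℚ) + b - x) / ((a : ℚ) + b) := by
  have hxa : a ≤ x := le_trans (le_max_left a b) hx1
  have hxb : b ≤ x := le_trans (le_max_right a b) hx1
  set m : ℕ := a + b - x with hm
  set N : ℕ := (PlanePartitions a b c).card with hN
  -- LHS as a single quotient
  have step1 : ∑ i ∈ Finset.Icc 1 m, E a b c i (x + i - a)
      = (∑ i ∈ Finset.Icc 1 m, ∑ T ∈ PlanePartitions a b c, (entry a b c T i (x + i - a) : ℚ)) / N := by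
    simp only [E]
    rw [← Finset.sum_div]
  rw [step1, Finset.sum_comm]
  have step2 : ∀ T ∈ PlanePartitions a b c,
      ∑ i ∈ Finset.Icc 1 m, (entry a b c T i (x + i - a) : ℚ) = ((R a b c T ((m:ℕ):ℤ) : ℕ) : ℚ) := by
    intro T _
    rw [R_bridge a b c x ha hb hxa hxb hx2 T]
    push_cast
    rfl
  rw [Finset.sum_congr rfl step2]
  have step3 : ∑ T ∈ PlanePartitions a b c, ((R a b c T ((m:ℕ):ℤ) : ℕ) : ℚ) = ((s a b c m : ℕ) : ℚ) := by
    rw [s]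
    push_cast
    rfl
  rw [step3]
  -- the key counting identity
  have hs : s a b c m = m * s a b c 1 := s_lin a b c m (by omega)
  have ht : s a b c (a+b) = (a+b) * s a b c 1 := s_lin a b c (a+b) le_rfl
  have htop : s a b c (a+b) = a * c * N := s_top a b c
  have keyN : (a + b) * s a b c m = m * (a * c * N) := by
    rw [hs, ← htop, ht]; ring
  have hNQ : (N : ℚ) ≠ 0 := Nat.cast_ne_zero.mpr (card_PP_pos a b c).ne'
  have habQ : ((a:ℚ) + b) ≠ 0 := by positivity
  rw [div_eq_div_iff hNQ habQ]
  have keyQ : ((a:ℚ) + b) * (s a b c m) = (m:ℚ) * ((a:ℚ) * c * N) := by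
    exact_mod_cast congrArg (fun t : ℕ => (t : ℚ)) keyN
  have hmQ : (m : ℚ) = (a:ℚ) + b - x := by
    rw [hm, Nat.cast_sub (by omega : x ≤ a + b)]
    push_cast
    ring
  rw [hmQ] at keyQ
  linarith [keyQ]
end
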